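/- Let d, K, M be positive integers, let L₁, L₂, L₃ ≥ 0 and ε > 0, and let C be a nonempty subset of ℝ^d. For each user j ∈ {1,…,M} let r_j : ℝ^d → [0,1] satisfy |r_j(c) − r_j(c'')| ≤ L₁·‖c − c''‖ for all c, c'' ∈ C. Let g, g' : ℝ^d → ℝ be such that g' is L₂-Lipschitz on C and |g(c) − g'(c)| ≤ ε for all c ∈ C. For each k ∈ {1,…,K}, let c_k, c'_k ∈ C satisfy ‖c_k − c'_k‖ ≤ L₃·ε. Let Π be the set of recommendation policies π assigning to each user j a subset π(j) ⊆ {1,…,K} of size exactly S (with S ≤ K), and define U(g, (c_k)_k, π) = ∑_{j=1}^M ∑_{k ∈ π(j)} r_j(c_k) − ∑_{k=1}^K g(c_k). Then if π ∈ Π maximizes U(g, (c_k)_k, ·) over Π and π' ∈ Π maximizes U(g', (c'_k)_k, ·) over Π, one has U(g, (c_k)_k, π) − U(g', (c'_k)_k, π') ≤ K·(M·L₁·L₃ + L₂·L₃ + 1)·ε. -/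

import Mathlib

/-- Discretization error bound for the feature-based contract: with rewards `r j` lying in
`[0,1]` and `L₁`-Lipschitz on `C`, `g'` an `L₂`-Lipschitz contract with `|g - g'| ≤ ε` on
`C`, and contents `cs k, cs' k ∈ C` with `‖cs k - cs' k‖ ≤ L₃ ε`, if `π` maximizes the
utility `U(g, cs, ·)` and `π'` maximizes `U(g', cs', ·)` over policies recommending exactly
`S` of the `K` items to each of the `M` users, then
`U(g, cs, π) - U(g', cs', π') ≤ K (M L₁ L₃ + L₂ L₃ + 1) ε`. -/
theorem feature_contract_discretization_bound
    (d K M S : ℕ) (hd : 0 < d) (hK : 0 < K) (hM : 0 < M) (hS : 0 < S) (hSK : S ≤ K)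
    (L₁ L₂ L₃ ε : ℝ) (hL₁ : 0 ≤ L₁) (hL₂ : 0 ≤ L₂) (hL₃ : 0 ≤ L₃) (hε : 0 < ε)
    (C : Set (EuclideanSpace ℝ (Fin d))) (hC : C.Nonempty)
    (r : Fin M → EuclideanSpace ℝ (Fin d) → ℝ)
    (hr_range : ∀ j, ∀ c ∈ C, r j c ∈ Set.Icc (0 : ℝ) 1)
    (hr_lip : ∀ j, ∀ c ∈ C, ∀ c'' ∈ C, |r j c - r j c''| ≤ L₁ * ‖c - c''‖)
    (g g' : EuclideanSpace ℝ (Fin d) → ℝ)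
    (hg'_lip : ∀ c ∈ C, ∀ c'' ∈ C, |g' c - g' c''| ≤ L₂ * ‖c - c''‖)
    (hgg' : ∀ c ∈ C, |g c - g' c| ≤ ε)
    (cs cs' : Fin K → EuclideanSpace ℝ (Fin d))
    (hcs : ∀ k, cs k ∈ C) (hcs' : ∀ k, cs' k ∈ C)
    (hclose : ∀ k, ‖cs k - cs' k‖ ≤ L₃ * ε)
    (π π' : Fin M → Finset (Fin K))
    (hπ : ∀ j, (π j).card = S) (hπ' : ∀ j, (π' j).card = S)
    (hπmax : ∀ q : Fin M → Finset (Fin K), (∀ j, (q j).card = S) →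
      (∑ j, ∑ k ∈ q j, r j (cs k)) - (∑ k, g (cs k))
        ≤ (∑ j, ∑ k ∈ π j, r j (cs k)) - (∑ k, g (cs k)))
    (hπ'max : ∀ q : Fin M → Finset (Fin K), (∀ j, (q j).card = S) →
      (∑ j, ∑ k ∈ q j, r j (cs' k)) - (∑ k, g' (cs' k))
        ≤ (∑ j, ∑ k ∈ π' j, r j (cs' k)) - (∑ k, g' (cs' k))) :
    ((∑ j, ∑ k ∈ π j, r j (cs k)) - (∑ k, g (cs k)))
      - ((∑ j, ∑ k ∈ π' j, r j (cs' k)) - (∑ k, g' (cs' k)))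
      ≤ (K : ℝ) * (M * L₁ * L₃ + L₂ * L₃ + 1) * ε := by
  have h1 := hπ'max π hπ
  have key : ((∑ j, ∑ k ∈ π j, r j (cs k)) - (∑ k, g (cs k)))
      - ((∑ j, ∑ k ∈ π j, r j (cs' k)) - (∑ k, g' (cs' k)))
      ≤ (K : ℝ) * (M * L₁ * L₃ + L₂ * L₃ + 1) * ε := by
    have hr_bound : (∑ j, ∑ k ∈ π j, r j (cs k)) - (∑ j, ∑ k ∈ π j, r j (cs' k))
        ≤ (M : ℝ) * K * (L₁ * L₃ * ε) := by
      rw [← Finset.sum_sub_distrib]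
      calc ∑ j, ((∑ k ∈ π j, r j (cs k)) - ∑ k ∈ π j, r j (cs' k))
          ≤ ∑ j : Fin M, (K : ℝ) * (L₁ * L₃ * ε) := by
            apply Finset.sum_le_sum
            intro j _
            rw [← Finset.sum_sub_distrib]
            calc ∑ k ∈ π j, (r j (cs k) - r j (cs' k))
                ≤ ∑ k ∈ π j, (L₁ * L₃ * ε) := by
                  apply Finset.sum_le_sum
                  intro k _
                  have h := hr_lip j (cs k) (hcs k) (cs' k) (hcs' k)
                  have := (abs_le.mp h).2
                  calc r j (cs k) - r j (cs' k) ≤ |r j (cs k) - r j (cs' k)| := le_abs_self _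
                    _ ≤ L₁ * ‖cs k - cs' k‖ := h
                    _ ≤ L₁ * (L₃ * ε) := by
                        exact mul_le_mul_of_nonneg_left (hclose k) hL₁
                    _ = L₁ * L₃ * ε := by ring
              _ = (π j).card * (L₁ * L₃ * ε) := by rw [Finset.sum_const, nsmul_eq_mul]
              _ ≤ (K : ℝ) * (L₁ * L₃ * ε) := by
                  apply mul_le_mul_of_nonneg_right
                  · exact_mod_cast (hπ j ▸ hSK : (π j).card ≤ K)
                  · positivity
        _ = (M : ℝ) * K * (L₁ * L₃ * ε) := by
            rw [Finset.sum_const, Finset.card_univ, Fintype.card_fin, nsmul_eq_mul]; ring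
    have hg_bound : (∑ k, g' (cs' k)) - (∑ k, g (cs k)) ≤ (K : ℝ) * (L₂ * L₃ * ε + ε) := by
      rw [← Finset.sum_sub_distrib]
      calc ∑ k, (g' (cs' k) - g (cs k))
          ≤ ∑ k : Fin K, (L₂ * L₃ * ε + ε) := by
            apply Finset.sum_le_sum
            intro k _
            have h2 := hg'_lip (cs' k) (hcs' k) (cs k) (hcs k)
            have h3 := hgg' (cs k) (hcs k)
            calc g' (cs' k) - g (cs k)
                = (g' (cs' k) - g' (cs k)) + (g' (cs k) - g (cs k)) := by ring
              _ ≤ |g' (cs' k) - g' (cs k)| + |g' (cs k) - g (cs k)| :=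
                  add_le_add (le_abs_self _) (le_abs_self _)
              _ ≤ L₂ * ‖cs' k - cs k‖ + ε := by
                  apply add_le_add h2
                  rw [abs_sub_comm]; exact h3
              _ ≤ L₂ * (L₃ * ε) + ε := by
                  apply add_le_add_left
                  apply mul_le_mul_of_nonneg_left _ hL₂
                  rw [norm_sub_rev]; exact hclose k
              _ = L₂ * L₃ * ε + ε := by ring
        _ = (K : ℝ) * (L₂ * L₃ * ε + ε) := by
            rw [Finset.sum_const, Finset.card_univ, Fintype.card_fin, nsmul_eq_mul]
    nlinarith [hr_bound, hg_bound]
  linarith [h1, key]
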